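/- Let 1 < q ≤ 2 and set c(q) = q(q−1)/2. Then for all x, v in the Euclidean space ℝ^m with x ≠ 0, one has |x + v|^q − |x|^q − q|x|^{q−1}⟨x/|x|, v⟩ ≥ c(q) |v|² (max(|x|², |x + v|²))^{q/2 − 1}. -/

import Mathlib

open Set Filter
open scoped RealInnerProductSpace

set_option linter.unnecessarySeqFocus false
set_option linter.unusedTactic false

/-- Second-order Taylor lower bound via two monotonicity passes. -/
lemma taylor_like_aux {g g1 g2 : ℝ → ℝ} {L : ℝ}
    (hg : ∀ t ∈ Icc (0:ℝ) 1, HasDerivAt g (g1 t) t)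
    (hg1 : ∀ t ∈ Icc (0:ℝ) 1, HasDerivAt g1 (g2 t) t)
    (hL : ∀ t ∈ Icc (0:ℝ) 1, L ≤ g2 t) :
    g 0 + g1 0 + L / 2 ≤ g 1 := by
  have h01 : (0:ℝ) ∈ Icc (0:ℝ) 1 := ⟨le_refl _, zero_le_one⟩
  have h11 : (1:ℝ) ∈ Icc (0:ℝ) 1 := ⟨zero_le_one, le_refl _⟩
  set φ1 : ℝ → ℝ := fun t => g1 t - g1 0 - L * t with hφ1def
  have hφ1deriv : ∀ t ∈ Icc (0:ℝ) 1, HasDerivAt φ1 (g2 t - L) t := by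
    intro t ht
    have h := ((hg1 t ht).sub_const (g1 0)).sub ((hasDerivAt_id t).const_mul L)
    exact h.congr_deriv (by ring)
  have hmono1 : MonotoneOn φ1 (Icc (0:ℝ) 1) := by
    apply monotoneOn_of_hasDerivWithinAt_nonneg (convex_Icc (0:ℝ) 1)
      (fun t ht => (hφ1deriv t ht).continuousAt.continuousWithinAt)
      (f' := fun t => g2 t - L)
    · intro t ht
      rw [interior_Icc] at ht
      exact (hφ1deriv t (Ioo_subset_Icc_self ht)).hasDerivWithinAt
    · intro t ht
      rw [interior_Icc] at ht
      have := hL t (Ioo_subset_Icc_self ht)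
      linarith
  have hφ1nonneg : ∀ t ∈ Icc (0:ℝ) 1, 0 ≤ φ1 t := by
    intro t ht
    have := hmono1 h01 ht ht.1
    simp only [hφ1def] at this ⊢
    linarith [this]
  set φ : ℝ → ℝ := fun t => g t - g 0 - g1 0 * t - L / 2 * t ^ 2 with hφdef
  have hφderiv : ∀ t ∈ Icc (0:ℝ) 1, HasDerivAt φ (φ1 t) t := by
    intro t ht
    have h := (((hg t ht).sub_const (g 0)).sub ((hasDerivAt_id t).const_mul (g1 0))).sub
      ((hasDerivAt_pow 2 t).const_mul (L / 2))
    exact h.congr_deriv (by simp only [hφ1def]; push_cast; ring)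
  have hmono : MonotoneOn φ (Icc (0:ℝ) 1) := by
    apply monotoneOn_of_hasDerivWithinAt_nonneg (convex_Icc (0:ℝ) 1)
      (fun t ht => (hφderiv t ht).continuousAt.continuousWithinAt) (f' := φ1)
    · intro t ht
      rw [interior_Icc] at ht
      exact (hφderiv t (Ioo_subset_Icc_self ht)).hasDerivWithinAt
    · intro t ht
      rw [interior_Icc] at ht
      exact hφ1nonneg t (Ioo_subset_Icc_self ht)
  have := hmono h01 h11 zero_le_one
  simp only [hφdef] at this
  nlinarith [this]

/-- Core scalar inequality, under the assumption that the quadratic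
`P t = w t² + 2 b t + c` is strictly positive on `[0,1]`. -/
lemma core_scalar (q b c w : ℝ) (hq1 : 1 < q) (hq2 : q ≤ 2) (hw : 0 ≤ w) (hc : 0 < c)
    (hb : b ^ 2 ≤ c * w) (hpos : ∀ t ∈ Icc (0:ℝ) 1, 0 < w * t ^ 2 + 2 * b * t + c) :
    q * (q - 1) / 2 * w * (max c (w + 2 * b + c)) ^ (q / 2 - 1) ≤
      (w + 2 * b + c) ^ (q / 2) - c ^ (q / 2) - q * c ^ (q / 2 - 1) * b := by
  set M := max c (w + 2 * b + c) with hMdef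
  have hM : 0 < M := lt_of_lt_of_le hc (le_max_left _ _)
  set P : ℝ → ℝ := fun t => w * t ^ 2 + 2 * b * t + c with hPdef
  have hPderiv : ∀ t : ℝ, HasDerivAt P (2 * w * t + 2 * b) t := by
    intro t
    have h := (((hasDerivAt_pow 2 t).const_mul w).add
      ((hasDerivAt_id t).const_mul (2 * b))).add_const c
    exact h.congr_deriv (by push_cast; ring)
  set g : ℝ → ℝ := fun t => P t ^ (q / 2) with hgdef
  set g1 : ℝ → ℝ := fun t => (2 * w * t + 2 * b) * (q / 2) * P t ^ (q / 2 - 1) with hg1def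
  set g2 : ℝ → ℝ := fun t =>
    2 * w * (q / 2) * P t ^ (q / 2 - 1) +
      ((2 * w * t + 2 * b) * (q / 2)) * ((2 * w * t + 2 * b) * (q / 2 - 1) * P t ^ (q / 2 - 1 - 1))
    with hg2def
  have hg : ∀ t ∈ Icc (0:ℝ) 1, HasDerivAt g (g1 t) t := fun t ht =>
    (hPderiv t).rpow_const (Or.inl (hpos t ht).ne')
  have hg1 : ∀ t ∈ Icc (0:ℝ) 1, HasDerivAt g1 (g2 t) t := by
    intro t ht
    have h1 : HasDerivAt (fun s => (2 * w * s + 2 * b) * (q / 2)) (2 * w * (q / 2)) t := by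
      have := (((hasDerivAt_id t).const_mul (2 * w)).add_const (2 * b)).mul_const (q / 2)
      exact this.congr_deriv (by push_cast; ring)
    have h2 : HasDerivAt (fun s => P s ^ (q / 2 - 1))
        ((2 * w * t + 2 * b) * (q / 2 - 1) * P t ^ (q / 2 - 1 - 1)) t :=
      (hPderiv t).rpow_const (Or.inl (hpos t ht).ne')
    have := h1.mul h2
    exact this
  set L := q * (q - 1) * w * M ^ (q / 2 - 1) with hLdef
  have hL : ∀ t ∈ Icc (0:ℝ) 1, L ≤ g2 t := by
    intro t ht
    have hu : 0 < P t := hpos t ht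
    have hPM : P t ≤ M := by
      have h1 : P t ≤ (1 - t) * c + t * (w + 2 * b + c) := by
        simp only [hPdef]
        nlinarith [mul_nonneg (mul_nonneg hw ht.1) (sub_nonneg.2 ht.2)]
      have h2 : c ≤ M := le_max_left _ _
      have h3 : w + 2 * b + c ≤ M := le_max_right _ _
      nlinarith [ht.1, ht.2]
    have e1 : M ^ (q / 2 - 1) ≤ P t ^ (q / 2 - 1) :=
      Real.rpow_le_rpow_of_nonpos hu hPM (by linarith)
    have hA : 0 < P t ^ (q / 2 - 1) := Real.rpow_pos_of_pos hu _
    have hB : 0 < P t ^ (q / 2 - 1 - 1) := Real.rpow_pos_of_pos hu _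
    have e3 : P t * P t ^ (q / 2 - 1 - 1) = P t ^ (q / 2 - 1) := by
      rw [mul_comm, ← Real.rpow_add_one hu.ne']
      ring_nf
    have e2 : (2 * w * t + 2 * b) ^ 2 * P t ^ (q / 2 - 1 - 1) ≤ 4 * w * P t ^ (q / 2 - 1) := by
      have h0 : (2 * w * t + 2 * b) ^ 2 ≤ 4 * w * P t := by
        simp only [hPdef]; nlinarith
      calc (2 * w * t + 2 * b) ^ 2 * P t ^ (q / 2 - 1 - 1)
          ≤ 4 * w * P t * P t ^ (q / 2 - 1 - 1) := mul_le_mul_of_nonneg_right h0 hB.le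
        _ = 4 * w * P t ^ (q / 2 - 1) := by rw [mul_assoc, e3]
    have hcoef : q / 2 * (q / 2 - 1) ≤ 0 := by nlinarith
    have h1'' : q / 2 * (q / 2 - 1) * (4 * w * P t ^ (q / 2 - 1)) ≤
        q / 2 * (q / 2 - 1) * ((2 * w * t + 2 * b) ^ 2 * P t ^ (q / 2 - 1 - 1)) :=
      mul_le_mul_of_nonpos_left e2 hcoef
    have h3 : q * (q - 1) * w * M ^ (q / 2 - 1) ≤ q * (q - 1) * w * P t ^ (q / 2 - 1) :=
      mul_le_mul_of_nonneg_left e1 (mul_nonneg (by nlinarith) hw)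
    calc L ≤ q * (q - 1) * w * P t ^ (q / 2 - 1) := h3
      _ = q * w * P t ^ (q / 2 - 1) + q / 2 * (q / 2 - 1) * (4 * w * P t ^ (q / 2 - 1)) := by ring
      _ ≤ q * w * P t ^ (q / 2 - 1) +
          q / 2 * (q / 2 - 1) * ((2 * w * t + 2 * b) ^ 2 * P t ^ (q / 2 - 1 - 1)) := by
            linarith [h1'']
      _ = g2 t := by simp only [hg2def]; ring
  have key := taylor_like_aux hg hg1 hL
  have hP0 : P 0 = c := by simp [hPdef]
  have hP1 : P 1 = w + 2 * b + c := by simp [hPdef]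
  have hg0 : g 0 = c ^ (q / 2) := by simp only [hgdef, hP0]
  have hg11 : g 1 = (w + 2 * b + c) ^ (q / 2) := by simp only [hgdef, hP1]
  have hg10 : g1 0 = q * c ^ (q / 2 - 1) * b := by
    simp only [hg1def, hP0]
    ring
  rw [hg0, hg11, hg10] at key
  simp only [hLdef] at key
  linarith

/-- The scalar inequality without the positivity assumption, by a limiting argument. -/
lemma scalar_key (q b c w : ℝ) (hq1 : 1 < q) (hq2 : q ≤ 2) (hw : 0 ≤ w) (hc : 0 < c)
    (hb : b ^ 2 ≤ c * w) :
    q * (q - 1) / 2 * w * (max c (w + 2 * b + c)) ^ (q / 2 - 1) ≤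
      (w + 2 * b + c) ^ (q / 2) - c ^ (q / 2) - q * c ^ (q / 2 - 1) * b := by
  have hPnn : ∀ t : ℝ, 0 ≤ w * t ^ 2 + 2 * b * t + c := by
    intro t
    rcases hw.eq_or_lt with hw0 | hw0
    · have hb2 : b ^ 2 = 0 := le_antisymm (by rw [← hw0] at hb; linarith [hb]) (sq_nonneg b)
      have hb0 : b = 0 := by
        have := sq_eq_zero_iff.mp hb2
        simpa using this
      rw [← hw0, hb0]; ring_nf; linarith
    · nlinarith [sq_nonneg (w * t + b)]
  have hM : 0 < max c (w + 2 * b + c) := lt_of_lt_of_le hc (le_max_left _ _)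
  have hP1nn : 0 ≤ w + 2 * b + c := by have := hPnn 1; linarith [this]
  -- the per-ε inequality
  have key : ∀ ε : ℝ, 0 < ε →
      q * (q - 1) / 2 * w * (max c (w + 2 * b + c) + ε) ^ (q / 2 - 1) ≤
        (w + 2 * b + c + ε) ^ (q / 2) - (c + ε) ^ (q / 2) - q * (c + ε) ^ (q / 2 - 1) * b := by
    intro ε hε
    have h := core_scalar q b (c + ε) w hq1 hq2 hw (by linarith)
      (by nlinarith [mul_nonneg hε.le hw])
      (fun t _ => by have := hPnn t; linarith)
    have hmax : max (c + ε) (w + 2 * b + (c + ε)) = max c (w + 2 * b + c) + ε := by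
      rw [show w + 2 * b + (c + ε) = w + 2 * b + c + ε by ring, max_add_add_right]
    rw [hmax, show w + 2 * b + (c + ε) = w + 2 * b + c + ε by ring] at h
    exact h
  -- pass to the limit ε → 0⁺
  have cont : ∀ r s : ℝ, (r ≠ 0 ∨ 0 ≤ s) →
      Tendsto (fun ε : ℝ => (r + ε) ^ s) (nhds 0) (nhds (r ^ s)) := by
    intro r s h
    have h1 : ContinuousAt (fun y : ℝ => y ^ s) r := Real.continuousAt_rpow_const r s h
    have h2 : Tendsto (fun ε : ℝ => r + ε) (nhds 0) (nhds r) := by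
      simpa using (continuous_add_left r).tendsto (0:ℝ)
    exact h1.tendsto.comp h2
  have hq0 : (0:ℝ) ≤ q / 2 := by linarith
  have hLHS : Tendsto (fun ε : ℝ => q * (q - 1) / 2 * w * (max c (w + 2 * b + c) + ε) ^ (q / 2 - 1))
      (nhdsWithin 0 (Ioi 0)) (nhds (q * (q - 1) / 2 * w * (max c (w + 2 * b + c)) ^ (q / 2 - 1))) :=
    (tendsto_const_nhds.mul (cont _ _ (Or.inl hM.ne'))).mono_left nhdsWithin_le_nhds
  have hRHS : Tendsto (fun ε : ℝ =>
      (w + 2 * b + c + ε) ^ (q / 2) - (c + ε) ^ (q / 2) - q * (c + ε) ^ (q / 2 - 1) * b)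
      (nhdsWithin 0 (Ioi 0))
      (nhds ((w + 2 * b + c) ^ (q / 2) - c ^ (q / 2) - q * c ^ (q / 2 - 1) * b)) := by
    refine Tendsto.mono_left ?_ nhdsWithin_le_nhds
    exact ((cont _ _ (Or.inr hq0)).sub (cont _ _ (Or.inl hc.ne'))).sub
      ((tendsto_const_nhds.mul (cont _ _ (Or.inl hc.ne'))).mul tendsto_const_nhds)
  exact le_of_tendsto_of_tendsto hLHS hRHS
    (eventually_nhdsWithin_of_forall fun ε hε => key ε hε)

/-- Key pointwise estimate behind Corollary 2.4: for `1 < q ≤ 2`, `c(q) = q(q-1)/2`, and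
`x ≠ 0`, one has
`|x + v|^q - |x|^q - q |x|^{q-1} ⟨x/|x|, v⟩ ≥ c(q) |v|² (max(|x|², |x+v|²))^{q/2 - 1}`. -/
theorem rpow_taylor_lower_bound
    (m : ℕ) (q : ℝ) (hq1 : 1 < q) (hq2 : q ≤ 2)
    (x v : EuclideanSpace ℝ (Fin m)) (hx : x ≠ 0) :
    q * (q - 1) / 2 * ‖v‖ ^ 2 * (max (‖x‖ ^ 2) (‖x + v‖ ^ 2)) ^ (q / 2 - 1) ≤
      ‖x + v‖ ^ q - ‖x‖ ^ q - q * ‖x‖ ^ (q - 1) * ⟪‖x‖⁻¹ • x, v⟫ := by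
  have ha : 0 < ‖x‖ := norm_pos_iff.mpr hx
  have hCS : ⟪x, v⟫ ^ 2 ≤ ‖x‖ ^ 2 * ‖v‖ ^ 2 := by
    have h := abs_real_inner_le_norm x v
    nlinarith [abs_nonneg ⟪x, v⟫, sq_abs ⟪x, v⟫]
  have h := scalar_key q ⟪x, v⟫ (‖x‖ ^ 2) (‖v‖ ^ 2) hq1 hq2 (by positivity) (by positivity) hCS
  have hsum : ‖v‖ ^ 2 + 2 * ⟪x, v⟫ + ‖x‖ ^ 2 = ‖x + v‖ ^ 2 := by
    rw [norm_add_sq_real]; ring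
  rw [hsum] at h
  have hsq : ∀ r : ℝ, 0 ≤ r → ∀ s : ℝ, ((r ^ 2 : ℝ)) ^ s = r ^ (2 * s) := by
    intro r hr s
    rw [← Real.rpow_natCast r 2, ← Real.rpow_mul hr]
    norm_num
  have e1 : ((‖x + v‖ ^ 2 : ℝ)) ^ (q / 2) = ‖x + v‖ ^ q := by
    rw [hsq _ (norm_nonneg _), show 2 * (q / 2) = q by ring]
  have e2 : ((‖x‖ ^ 2 : ℝ)) ^ (q / 2) = ‖x‖ ^ q := by
    rw [hsq _ (norm_nonneg _), show 2 * (q / 2) = q by ring]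
  have e3 : ((‖x‖ ^ 2 : ℝ)) ^ (q / 2 - 1) = ‖x‖ ^ (q - 2) := by
    rw [hsq _ (norm_nonneg _), show 2 * (q / 2 - 1) = q - 2 by ring]
  have hpow : ‖x‖ ^ (q - 1) * ‖x‖⁻¹ = ‖x‖ ^ (q - 2) := by
    rw [← Real.rpow_neg_one ‖x‖, ← Real.rpow_add ha]
    ring_nf
  have eInner : q * ‖x‖ ^ (q - 1) * ⟪‖x‖⁻¹ • x, v⟫ = q * ((‖x‖ ^ 2 : ℝ)) ^ (q / 2 - 1) * ⟪x, v⟫ := by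
    rw [real_inner_smul_left, e3]
    linear_combination (q * ⟪x, v⟫) * hpow
  have goal_eq : ‖x + v‖ ^ q - ‖x‖ ^ q - q * ‖x‖ ^ (q - 1) * ⟪‖x‖⁻¹ • x, v⟫ =
      ((‖x + v‖ ^ 2 : ℝ)) ^ (q / 2) - ((‖x‖ ^ 2 : ℝ)) ^ (q / 2) -
        q * ((‖x‖ ^ 2 : ℝ)) ^ (q / 2 - 1) * ⟪x, v⟫ := by
    rw [eInner, e1, e2]
  rw [goal_eq]
  exact h
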